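/- For all natural numbers n and k, k' ≤ n, the column orthogonality relation Σ_{m=0}^{n} C(n, m, k) * C(n, k', m) equals 2^n if k = k' and 0 otherwise (i.e., the Kravchuk matrix K with entries K(k, m) = C(n, k, m) satisfies K² = 2^n · I). -/

import Mathlib

open Finset

/-- Generalized binomial (Kravchuk) coefficient:
`C(n,k,m) = Σ_{l=0}^{m} (-1)^l * binom(n-m, k-l) * binom(m, l)`,
with the convention that the binomial vanishes for a negative lower index
(encoded by the `if l ≤ k` guard, since we use natural subtraction). -/
def kravC (n k m : ℕ) : ℤ :=
  ∑ l ∈ Finset.range (m + 1),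
    (-1 : ℤ) ^ l * (if l ≤ k then ((n - m).choose (k - l) : ℤ) else 0) * (m.choose l : ℤ)

open Polynomial in
private lemma coeff_one_sub_X_pow' (m l : ℕ) :
    ((1 - X : ℚ[X]) ^ m).coeff l = (-1 : ℚ) ^ l * (m.choose l : ℚ) := by
  have h : (1 - X : ℚ[X]) ^ m
      = ∑ j ∈ range (m + 1), C ((-1 : ℚ) ^ j * (m.choose j : ℚ)) * X ^ j := by
    rw [sub_eq_add_neg, add_comm, add_pow]
    refine Finset.sum_congr rfl fun j hj => ?_
    rw [neg_pow]
    simp [C_mul, mul_comm, mul_assoc, mul_left_comm]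
  rw [h, finset_sum_coeff]
  simp only [coeff_C_mul, coeff_X_pow]
  rcases le_or_gt l m with hlm | hlm
  · rw [Finset.sum_eq_single l]
    · simp
    · intro b _ hb; simp [Ne.symm hb]
    · intro hl; exact absurd (Finset.mem_range.2 (Nat.lt_succ_of_le hlm)) hl
  · rw [Finset.sum_eq_zero, Nat.choose_eq_zero_of_lt hlm]
    · simp
    · intro b hb
      have : b ≠ l := by rw [Finset.mem_range] at hb; omega
      simp [Ne.symm this]

open Polynomial in
private lemma kravC_eq_coeff (n k m : ℕ) :
    ((kravC n k m : ℤ) : ℚ) = ((1 - X : ℚ[X]) ^ m * (1 + X) ^ (n - m)).coeff k := by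
  rw [coeff_mul, Nat.sum_antidiagonal_eq_sum_range_succ_mk]
  simp only [coeff_one_sub_X_pow', coeff_one_add_X_pow]
  have key : ∀ N : ℕ, m + 1 ≤ N → k + 1 ≤ N →
      ((kravC n k m : ℤ) : ℚ)
        = ∑ l ∈ range N, (-1 : ℚ) ^ l * (if l ≤ k then ((n - m).choose (k - l) : ℚ) else 0)
            * (m.choose l : ℚ) := by
    intro N h1 h2
    rw [kravC]
    push_cast
    rw [Finset.sum_subset (Finset.range_subset_range.2 h1) (fun l _ hl => by
      rw [Finset.mem_range, not_lt] at hl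
      have hc : m.choose l = 0 := Nat.choose_eq_zero_of_lt (by omega)
      simp [hc])]
  rw [key (m + k + 2) (by omega) (by omega)]
  rw [← Finset.sum_subset (Finset.range_subset_range.2 (by omega : k + 1 ≤ m + k + 2))
      (fun l _ hl => by
        rw [Finset.mem_range, not_lt] at hl
        rw [if_neg (by omega)]
        ring)]
  refine Finset.sum_congr rfl fun l hl => ?_
  rw [Finset.mem_range] at hl
  rw [if_pos (by omega)]
  ring

open Polynomial in
private lemma key_poly (n k : ℕ) (hk : k ≤ n) :
    (∑ m ∈ range (n + 1),
      C (((1 - X : ℚ[X]) ^ k * (1 + X) ^ (n - k)).coeff m)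
        * ((1 - X : ℚ[X]) ^ m * (1 + X) ^ (n - m)))
    = C ((2 : ℚ) ^ n) * X ^ k := by
  obtain ⟨j, rfl⟩ : ∃ j, n = k + j := ⟨n - k, (Nat.add_sub_cancel' hk).symm⟩
  set n := k + j with hn
  have hnk : n - k = j := by omega
  set P : ℚ[X] := (1 - X) ^ k * (1 + X) ^ (n - k) with hP
  apply RatFunc.algebraMap_injective ℚ
  set F := algebraMap ℚ[X] (RatFunc ℚ) with hF
  have hFC : ∀ c : ℚ, F (C c) = RatFunc.C c := fun c => RatFunc.algebraMap_C c
  set t : RatFunc ℚ := F X with ht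
  have hw : (1 : RatFunc ℚ) + t ≠ 0 := by
    have h1 : (1 + X : ℚ[X]) ≠ 0 := fun h => by simpa using congrArg (eval 0) h
    have := RatFunc.algebraMap_ne_zero h1
    rw [map_add, map_one] at this; exact this
  have hdeg : P.natDegree < n + 1 := by
    have h1 : ((1 - X : ℚ[X]) ^ k).natDegree ≤ k * 1 :=
      natDegree_pow_le_of_le _ (le_trans (natDegree_sub_le _ _) (by simp))
    have h2 : ((1 + X : ℚ[X]) ^ (n - k)).natDegree ≤ (n - k) * 1 :=
      natDegree_pow_le_of_le _ (le_trans (natDegree_add_le _ _) (by simp))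
    have h3 := natDegree_mul_le (p := (1 - X : ℚ[X]) ^ k) (q := (1 + X : ℚ[X]) ^ (n - k))
    rw [← hP] at h3
    omega
  rw [map_sum, map_mul, map_pow]
  simp only [map_mul, map_pow, map_sub, map_add, map_one, hFC]
  set u : RatFunc ℚ := (1 - t) / (1 + t) with hu
  have step1 : ∀ m ∈ range (n + 1),
      RatFunc.C (P.coeff m) * ((1 - t) ^ m * (1 + t) ^ (n - m))
        = (1 + t) ^ n * (RatFunc.C (P.coeff m) * u ^ m) := by
    intro m hm
    rw [Finset.mem_range] at hm
    rw [hu, div_pow, pow_sub₀ _ hw (by omega)]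
    field_simp
  rw [Finset.sum_congr rfl step1, ← Finset.mul_sum]
  have step2 : (∑ m ∈ range (n + 1), RatFunc.C (P.coeff m) * u ^ m)
      = Polynomial.aeval u P := by
    rw [Polynomial.aeval_def, Polynomial.eval₂_eq_sum_range' _ hdeg]
    rw [← RatFunc.algebraMap_eq_C]
    simp only [eq_ratCast]
  rw [step2, hP]
  rw [map_mul, map_pow, map_pow, map_sub, map_add, map_one, Polynomial.aeval_X]
  have e1 : (1 : RatFunc ℚ) - u = 2 * t / (1 + t) := by
    rw [hu]; field_simp; ring
  have e2 : (1 : RatFunc ℚ) + u = 2 / (1 + t) := by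
    rw [hu]; field_simp; ring
  have h2c : RatFunc.C (2 : ℚ) = 2 := map_ofNat _ 2
  rw [e1, e2, div_pow, div_pow, h2c, hnk, ← ht, hn]
  field_simp
  ring

theorem kravC_column_orthogonality (n k k' : ℕ) (hk : k ≤ n) (hk' : k' ≤ n) :
    (∑ m ∈ Finset.range (n + 1), kravC n m k * kravC n k' m) =
      if k = k' then (2 : ℤ) ^ n else 0 := by
  open Polynomial in
  have cast_eq : ((∑ m ∈ Finset.range (n + 1), kravC n m k * kravC n k' m : ℤ) : ℚ)
      = (((if k = k' then (2 : ℤ) ^ n else 0) : ℤ) : ℚ) := by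
    have step1 : ((∑ m ∈ Finset.range (n + 1), kravC n m k * kravC n k' m : ℤ) : ℚ)
        = ∑ m ∈ Finset.range (n + 1),
            (((1 - X : ℚ[X]) ^ k * (1 + X) ^ (n - k)).coeff m)
              * (((1 - X : ℚ[X]) ^ m * (1 + X) ^ (n - m)).coeff k') := by
      push_cast
      exact Finset.sum_congr rfl fun m _ => by
        rw [kravC_eq_coeff n m k, kravC_eq_coeff n k' m]
    rw [step1]
    have step2 : (∑ m ∈ Finset.range (n + 1),
          (((1 - X : ℚ[X]) ^ k * (1 + X) ^ (n - k)).coeff m)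
            * (((1 - X : ℚ[X]) ^ m * (1 + X) ^ (n - m)).coeff k'))
        = (∑ m ∈ Finset.range (n + 1),
            C (((1 - X : ℚ[X]) ^ k * (1 + X) ^ (n - k)).coeff m)
              * ((1 - X : ℚ[X]) ^ m * (1 + X) ^ (n - m))).coeff k' := by
      rw [finset_sum_coeff]
      exact Finset.sum_congr rfl fun m _ => (coeff_C_mul _).symm
    rw [step2, key_poly n k hk, coeff_C_mul, coeff_X_pow]
    rcases eq_or_ne k k' with h | h
    · subst h; norm_num
    · simp [h, Ne.symm h]
  exact_mod_cast cast_eq
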